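/- Let X be an n-point metric space (n ≥ 2) in which the distance between any two distinct points is 1 or 2. Then X embeds into n-dimensional Euclidean space ℝ^n (equivalently, into ℓ_2) with distortion at most 2·√((n−1)/n); that is, there exist f : X → ℝ^n and r > 0 such that r·d(x,y) ≤ ‖f(x) − f(y)‖_2 ≤ 2·√((n−1)/n)·r·d(x,y) for all x,y ∈ X. -/

import Mathlib

/-- Every `n`-point metric space (`n ≥ 2`) in which all distances between distinct
points are 1 or 2 embeds into Euclidean space `ℝⁿ` with distortion at most
`2·√((n−1)/n)`. -/
theorem stmt11 {X : Type*} [MetricSpace X] [Fintype X] (n : ℕ) (hn : 2 ≤ n)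
    (hcard : Fintype.card X = n)
    (h12 : ∀ x y : X, x ≠ y → dist x y = 1 ∨ dist x y = 2) :
    ∃ (f : X → EuclideanSpace ℝ (Fin n)) (r : ℝ), 0 < r ∧
      ∀ x y : X, r * dist x y ≤ dist (f x) (f y) ∧
        dist (f x) (f y) ≤ 2 * Real.sqrt (((n : ℝ) - 1) / n) * r * dist x y := by
  classical
  obtain e := Fintype.equivFinOfCardEq hcard
  have hm : (1 : ℝ) ≤ (n : ℝ) - 1 := by
    have : (2 : ℝ) ≤ (n : ℝ) := by exact_mod_cast hn
    linarith
  have hm0 : (0 : ℝ) < (n : ℝ) - 1 := by linarith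
  have hn0 : (0 : ℝ) < (n : ℝ) := by linarith
  set c : ℝ := 1 / (2 * ((n : ℝ) - 1)) with hc
  have hc0 : 0 < c := by positivity
  have hcm : c * ((n : ℝ) - 1) = 1 / 2 := by
    field_simp [hc]
    rw [hc]; field_simp
  set G : Matrix (Fin n) (Fin n) ℝ := fun i j =>
    if i = j then 1 / 2 else if dist (e.symm i) (e.symm j) = 2 then -c else 0 with hGdef
  have hGsymm : ∀ i j, G i j = G j i := by
    intro i j
    by_cases h : i = j
    · subst h; rfl
    · simp only [hGdef, if_neg h, if_neg (Ne.symm h), dist_comm]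
  have hGoff : ∀ i j, i ≠ j → |G i j| ≤ c := by
    intro i j h
    simp only [hGdef, if_neg h]
    split <;> simp [abs_of_nonneg, le_of_lt hc0]
  have hGdiag : ∀ i, G i i = 1 / 2 := by intro i; simp [hGdef]
  -- positive semidefiniteness
  have hPSD : G.PosSemidef := by
    refine Matrix.posSemidef_iff_dotProduct_mulVec.mpr ⟨?_, ?_⟩
    · ext i j
      simp only [Matrix.conjTranspose_apply, star_trivial]
      exact hGsymm j i
    · intro v
      simp only [star_trivial, dotProduct, Matrix.mulVec, Finset.mul_sum]
      have key : ∀ i j : Fin n,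
          (1 / 2 + c) * (if i = j then v i ^ 2 else 0) - c * (|v i| * |v j|)
            ≤ v i * (G i j * v j) := by
        intro i j
        by_cases h : i = j
        · subst h
          rw [hGdiag, if_pos rfl, abs_mul_abs_self]
          ring_nf
          nlinarith [sq_nonneg (v i)]
        · rw [if_neg h]
          have h1 : |v i * (G i j * v j)| ≤ c * (|v i| * |v j|) := by
            rw [abs_mul, abs_mul]
            have := hGoff i j h
            have hvi := abs_nonneg (v i)
            have hvj := abs_nonneg (v j)
            calc |v i| * (|G i j| * |v j|) ≤ |v i| * (c * |v j|) := by
                  apply mul_le_mul_of_nonneg_left _ hvi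
                  exact mul_le_mul_of_nonneg_right this hvj
              _ = c * (|v i| * |v j|) := by ring
          have h2 := neg_abs_le (v i * (G i j * v j))
          linarith
      have hsum : ∑ i, ∑ j, ((1 / 2 + c) * (if i = j then v i ^ 2 else 0)
              - c * (|v i| * |v j|))
          ≤ ∑ i, ∑ j, v i * (G i j * v j) :=
        Finset.sum_le_sum fun i _ => Finset.sum_le_sum fun j _ => key i j
      refine le_trans ?_ (le_trans hsum (le_of_eq ?_))
      · have hT : (∑ i, |v i|) ^ 2 ≤ (n : ℝ) * ∑ i, v i ^ 2 := by
          have := sq_sum_le_card_mul_sum_sq (s := (Finset.univ : Finset (Fin n)))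
            (f := fun i => |v i|)
          simp only [Finset.card_univ, Fintype.card_fin, sq_abs] at this
          exact_mod_cast this
        have hS : (0 : ℝ) ≤ ∑ i, v i ^ 2 :=
          Finset.sum_nonneg fun i _ => sq_nonneg _
        have expand : ∑ i, ∑ j, ((1 / 2 + c) * (if i = j then v i ^ 2 else 0)
                - c * (|v i| * |v j|))
            = (1 / 2 + c) * (∑ i, v i ^ 2) - c * (∑ i, |v i|) ^ 2 := by
          rw [Finset.sum_congr rfl (fun i _ => Finset.sum_sub_distrib _ _)]
          rw [Finset.sum_sub_distrib]
          congr 1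
          · rw [Finset.mul_sum]
            refine Finset.sum_congr rfl fun i _ => ?_
            rw [← Finset.mul_sum]
            congr 1
            simp
          · rw [sq, Finset.sum_mul_sum, Finset.mul_sum]
            refine Finset.sum_congr rfl fun i _ => ?_
            rw [Finset.mul_sum]
        rw [expand]
        nlinarith
      · rfl
  obtain ⟨B, hB⟩ : ∃ B : Matrix (Fin n) (Fin n) ℝ, G = Matrix.conjTranspose B * B := by
    have hH := hPSD.1
    refine ⟨Matrix.diagonal (fun i => Real.sqrt (hH.eigenvalues i)) *
      star (hH.eigenvectorUnitary : Matrix (Fin n) (Fin n) ℝ), ?_⟩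
    conv_lhs => rw [hH.spectral_theorem, Unitary.conjStarAlgAut_apply]
    rw [Matrix.conjTranspose_mul, ← Matrix.star_eq_conjTranspose, star_star,
      Matrix.diagonal_conjTranspose, ← mul_assoc, mul_assoc _ (Matrix.diagonal (star _)),
      Matrix.diagonal_mul_diagonal]
    congr 3
    funext i
    simp [Real.mul_self_sqrt (hPSD.eigenvalues_nonneg i)]
  have hInner : ∀ i j, (∑ k, B k i * B k j) = G i j := by
    intro i j
    rw [hB]
    simp [Matrix.mul_apply, Matrix.conjTranspose_apply]
  set f : X → EuclideanSpace ℝ (Fin n) := fun x => WithLp.toLp 2 (fun k => B k (e x)) with hf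
  have hdist : ∀ x y : X, dist (f x) (f y)
      = Real.sqrt (G (e x) (e x) - 2 * G (e x) (e y) + G (e y) (e y)) := by
    intro x y
    rw [EuclideanSpace.dist_eq]
    congr 1
    have : ∀ k : Fin n, dist (f x k) (f y k) ^ 2
        = B k (e x) * B k (e x) - 2 * (B k (e x) * B k (e y)) + B k (e y) * B k (e y) := by
      intro k
      rw [Real.dist_eq, sq_abs]
      ring
    rw [Finset.sum_congr rfl fun k _ => this k, Finset.sum_add_distrib,
      Finset.sum_sub_distrib, ← Finset.mul_sum, hInner, hInner, hInner]
  set t : ℝ := Real.sqrt ((n : ℝ) / ((n : ℝ) - 1)) with htdef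
  have ht0 : 0 < t := Real.sqrt_pos.mpr (by positivity)
  have ht2 : t ≤ 2 := by
    rw [htdef, show (2 : ℝ) = Real.sqrt 4 by
      rw [show (4 : ℝ) = 2 ^ 2 by norm_num, Real.sqrt_sq (by norm_num)]]
    apply Real.sqrt_le_sqrt
    rw [div_le_iff₀ hm0]
    linarith
  refine ⟨f, t / 2, by positivity, ?_⟩
  have hα : 2 * Real.sqrt (((n : ℝ) - 1) / n) * (t / 2) = 1 := by
    have h1 : 2 * Real.sqrt (((n : ℝ) - 1) / n) * (t / 2)
        = Real.sqrt (((n : ℝ) - 1) / n) * Real.sqrt ((n : ℝ) / ((n : ℝ) - 1)) := by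
      rw [htdef]; ring
    rw [h1, ← Real.sqrt_mul (by positivity)]
    have h2 : ((n : ℝ) - 1) / n * ((n : ℝ) / ((n : ℝ) - 1)) = 1 := by
      field_simp
    rw [h2, Real.sqrt_one]
  intro x y
  by_cases hxy : x = y
  · subst hxy
    simp [dist_self]
  · have hedq : e x ≠ e y := fun h => hxy (e.injective h)
    have hback : dist (e.symm (e x)) (e.symm (e y)) = dist x y := by simp
    rcases h12 x y hxy with hd | hd
    · have hG1 : G (e x) (e y) = 0 := by
        simp only [hGdef, if_neg hedq, hback, hd]
        norm_num
      have hdf : dist (f x) (f y) = 1 := by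
        rw [hdist, hG1, hGdiag, hGdiag]
        norm_num
      rw [hdf, hd]
      constructor
      · linarith
      · rw [mul_one, hα]
    · have hG2 : G (e x) (e y) = -c := by
        simp [hGdef, if_neg hedq, hback, hd]
      have hdf : dist (f x) (f y) = t := by
        rw [hdist, hG2, hGdiag, hGdiag, htdef]
        congr 1
        rw [hc]
        field_simp
        ring
      rw [hdf, hd]
      constructor
      · linarith
      · calc t ≤ 2 := ht2
          _ = 2 * Real.sqrt (((n : ℝ) - 1) / n) * (t / 2) * 2 := by rw [hα]; ring
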